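/- Let T₁,…,Tₙ be pairwise commuting N×N upper-triangular complex matrices. Then (λ₁,…,λₙ) ∈ ℂⁿ is a joint eigenvalue of (T₁,…,Tₙ) if and only if there exists k ∈ {1,…,N} such that λ_i = (T_i)_{kk} for every i = 1,…,n; that is, the set of joint eigenvalues of a commuting tuple of matrices coincides with the set of joint diagonal coefficients in any simultaneous upper-triangularization. -/

import Mathlib

open LinearMap Filter

/-- Key lemma: commuting endomorphisms of a finite-dimensional complex vector space which
all map some vector `w ∉ V` into an invariant subspace `V` have a common kernel vector. -/
theorem aux_common_kernel :
    ∀ (n : ℕ) (U : Type) [AddCommGroup U] [Module ℂ U] [FiniteDimensional ℂ U]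
    (B : Fin n → Module.End ℂ U)
    (_ : ∀ i j, B i * B j = B j * B i)
    (V : Submodule ℂ U) (_ : ∀ i, ∀ x ∈ V, B i x ∈ V)
    (w : U) (_ : w ∉ V) (_ : ∀ i, B i w ∈ V),
    ∃ u : U, u ≠ 0 ∧ ∀ i, B i u = 0 := by
  intro n
  induction n with
  | zero =>
    intro U _ _ _ B hB V hV w hw hBw
    exact ⟨w, fun h => hw (h ▸ V.zero_mem), fun i => i.elim0⟩
  | succ n IH =>
    intro U _ _ _ B hB V hV w hw hBw
    set f := B (Fin.last n) with hf
    have hfV : ∀ x ∈ V, f x ∈ V := hV (Fin.last n)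
    -- commuting facts
    have hcomm : ∀ i, Commute (B i) f := fun i => hB i (Fin.last n)
    -- invariance of kernels/ranges of powers under all B i
    -- choose an exponent d making everything stabilize
    obtain ⟨d, hd1, hdcompl, hdsup, hdcoV⟩ :
        ∃ d : ℕ, 1 ≤ d ∧ IsCompl (ker (f ^ d)) (range (f ^ d)) ∧
          (⨆ m, ker (f ^ m)) = ker (f ^ d) ∧
          Codisjoint (ker ((f.restrict hfV) ^ d)) (range ((f.restrict hfV) ^ d)) := by
      have h1 := eventually_ge_atTop 1
      have h2 := f.eventually_isCompl_ker_pow_range_pow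
      have h3 := f.eventually_iSup_ker_pow_eq
      have h4 := (f.restrict hfV).eventually_codisjoint_ker_pow_range_pow
      obtain ⟨d, hd⟩ := (((h1.and h2).and h3).and h4).exists
      exact ⟨d, hd.1.1.1, hd.1.1.2, hd.1.2, hd.2⟩
    set G := ker (f ^ d) with hG
    set H := range (f ^ d) with hH
    -- ker f ≤ G
    have hkerf : ker f ≤ G := by
      intro x hx
      have hx0 : f x = 0 := LinearMap.mem_ker.mp hx
      refine LinearMap.mem_ker.mpr ?_
      rw [← Nat.sub_add_cancel hd1, pow_succ, Module.End.mul_apply, hx0, map_zero]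
    -- B i maps G to G and H to H
    have hGinv : ∀ i, ∀ x ∈ G, B i x ∈ G := by
      intro i x hx
      have : (f ^ d) (B i x) = B i ((f ^ d) x) := by
        have := (hcomm i).symm.pow_left d
        exact congrFun (congrArg DFunLike.coe this.eq) x
      refine LinearMap.mem_ker.mpr ?_
      rw [this, LinearMap.mem_ker.mp hx, map_zero]
    have hHinv : ∀ i, ∀ x ∈ H, B i x ∈ H := by
      intro i x hx
      obtain ⟨y, hy⟩ := hx
      refine ⟨B i y, ?_⟩
      have := (hcomm i).symm.pow_left d
      calc (f ^ d) (B i y) = B i ((f ^ d) y) := congrFun (congrArg DFunLike.coe this.eq) y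
        _ = B i x := by rw [hy]
    -- decompose w = g + h
    obtain ⟨g, hgG, h, hhH, hghw⟩ := Submodule.mem_sup.mp
      (by rw [codisjoint_iff.mp hdcompl.codisjoint]; trivial :
        w ∈ G ⊔ H)
    have hdisj : ∀ x, x ∈ G → x ∈ H → x = 0 := fun x hx hy =>
      (Submodule.mem_bot ℂ).mp (hdcompl.disjoint.eq_bot ▸ Submodule.mem_inf.mpr ⟨hx, hy⟩)
    -- every element of V decomposes inside V
    have hVdec : ∀ v ∈ V, ∃ p ∈ V ⊓ G, ∃ q ∈ V ⊓ H, v = p + q := by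
      intro v hv
      have := codisjoint_iff.mp hdcoV
      have hmem : (⟨v, hv⟩ : V) ∈ ker ((f.restrict hfV) ^ d) ⊔ range ((f.restrict hfV) ^ d) := by
        rw [this]; trivial
      obtain ⟨p, hp, q, hq, hpq⟩ := Submodule.mem_sup.mp hmem
      rw [Module.End.pow_restrict d hfV] at hp hq
      refine ⟨(p : U), ⟨p.2, ?_⟩, (q : U), ⟨q.2, ?_⟩, ?_⟩
      · have := LinearMap.mem_ker.mp hp
        rw [restrict_apply] at this
        exact LinearMap.mem_ker.mpr (congrArg Subtype.val this)
      · obtain ⟨y, hy⟩ := hq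
        exact ⟨(y : U), congrArg Subtype.val hy⟩
      · have := congrArg Subtype.val hpq
        simpa using this.symm
    -- show h ∈ V
    have hhV : h ∈ V := by
      obtain ⟨p, hp, q, hq, hpq⟩ := hVdec (f w) (hBw (Fin.last n))
      -- f w = f g + f h with f g ∈ G, f h ∈ H
      have hfg : f g ∈ G := hGinv (Fin.last n) g hgG
      have hfh : f h ∈ H := hHinv (Fin.last n) h hhH
      have hfw : f w = f g + f h := by rw [← map_add, hghw]
      -- uniqueness of decomposition: f h = q
      have huniq : f h = q := by
        have hx : f h - q ∈ H := H.sub_mem hfh hq.2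
        have heq : p + q = f g + f h := by rw [← hpq, hfw]
        have hy : f h - q ∈ G := by
          have h5 : f h - q = p - f g :=
            sub_eq_sub_iff_add_eq_add.mpr (by rw [add_comm]; exact heq.symm)
          rw [h5]; exact G.sub_mem hp.2 hfg
        have := hdisj _ hy hx
        exact sub_eq_zero.mp this
      -- f is injective on V ⊓ H, hence surjective there
      set W := V ⊓ H with hW
      have hWinv : ∀ x ∈ W, f x ∈ W := fun x hx =>
        ⟨hfV x hx.1, hHinv (Fin.last n) x hx.2⟩
      have hinj : Function.Injective (f.restrict hWinv) := by
        rw [← ker_eq_bot]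
        rw [Submodule.eq_bot_iff]
        rintro ⟨x, hxW⟩ hx
        have hx0 : f x = 0 := congrArg Subtype.val (LinearMap.mem_ker.mp hx)
        have : x ∈ G := hkerf (LinearMap.mem_ker.mpr hx0)
        have : x = 0 := hdisj x this hxW.2
        exact Subtype.ext this
      have hsurj : Function.Surjective (f.restrict hWinv) :=
        LinearMap.injective_iff_surjective.mp hinj
      have hqW : q ∈ W := ⟨hq.1, hq.2⟩
      obtain ⟨⟨x, hxW⟩, hxq⟩ := hsurj ⟨q, hqW⟩
      have hfx : f x = q := congrArg Subtype.val hxq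
      -- h - x ∈ ker f ∩ H = 0
      have h1 : h - x ∈ G := hkerf (LinearMap.mem_ker.mpr (by rw [map_sub, hfx, huniq, sub_self]))
      have h2 : h - x ∈ H := H.sub_mem hhH hxW.2
      have : h = x := sub_eq_zero.mp (hdisj _ h1 h2)
      rw [this]; exact hxW.1
    -- hence g ∉ V and B i g ∈ V for all i
    have hgV : g ∉ V := fun hgV => hw (hghw ▸ V.add_mem hgV hhV)
    have hBgV : ∀ i, B i g ∈ V := by
      intro i
      have : B i g = B i w - B i h := by rw [← hghw]; rw [map_add]; abel
      rw [this]
      exact V.sub_mem (hBw i) (hV i h hhV)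
    -- restrict the first n operators to G and apply IH
    have hGB : ∀ i : Fin n, ∀ x ∈ G, B i.castSucc x ∈ G := fun i => hGinv i.castSucc
    set C : Fin n → Module.End ℂ G := fun i => (B i.castSucc).restrict (hGB i) with hC
    have hCcomm : ∀ i j, C i * C j = C j * C i := by
      intro i j
      ext x
      have h1 : B i.castSucc (B j.castSucc (x : U)) = B j.castSucc (B i.castSucc (x : U)) := by
        have := congrFun (congrArg DFunLike.coe (hB i.castSucc j.castSucc)) (x : U)
        simpa [Module.End.mul_apply] using this
      simp only [Module.End.mul_apply, hC, LinearMap.restrict_coe_apply]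
      exact h1
    set V' : Submodule ℂ G := V.comap G.subtype with hV'
    have hV'inv : ∀ i, ∀ x ∈ V', C i x ∈ V' := by
      intro i x hx
      exact hV i.castSucc (x : U) hx
    have hw' : (⟨g, hgG⟩ : G) ∉ V' := hgV
    have hBw' : ∀ i, C i ⟨g, hgG⟩ ∈ V' := fun i => hBgV i.castSucc
    obtain ⟨u', hu'0, hu'⟩ := IH G C hCcomm V' hV'inv ⟨g, hgG⟩ hw' hBw'
    -- now kill also f using nilpotency of f on G
    have huU : (u' : U) ≠ 0 := fun h => hu'0 (Subtype.ext h)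
    have hBu : ∀ i : Fin n, B i.castSucc (u' : U) = 0 := by
      intro i
      have := hu' i
      exact congrArg Subtype.val this
    have hfd : (f ^ d) (u' : U) = 0 := LinearMap.mem_ker.mp u'.2
    -- minimal m with f^m u' = 0
    have hex : ∃ m, (f ^ m) (u' : U) = 0 := ⟨d, hfd⟩
    classical
    set m := Nat.find hex with hm
    have hm0 : m ≠ 0 := by
      intro h
      have := Nat.find_spec hex
      rw [← hm, h, pow_zero] at this
      exact huU this
    set v := (f ^ (m - 1)) (u' : U) with hv
    have hv0 : v ≠ 0 := Nat.find_min hex (Nat.pred_lt hm0)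
    refine ⟨v, hv0, ?_⟩
    intro i
    refine Fin.lastCases ?_ ?_ i
    · show f v = 0
      have : f ((f ^ (m - 1)) (u' : U)) = (f ^ m) (u' : U) := by
        rw [← Module.End.mul_apply, ← pow_succ']
        have h9 : m - 1 + 1 = m := by omega
        rw [h9]
      rw [hv, this]
      exact Nat.find_spec hex
    · intro i
      show B i.castSucc v = 0
      have hcom : Commute (B i.castSucc) (f ^ (m - 1)) := (hcomm i.castSucc).pow_right _
      have : B i.castSucc ((f ^ (m - 1)) (u' : U)) = (f ^ (m - 1)) (B i.castSucc (u' : U)) := by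
        rw [← Module.End.mul_apply, ← Module.End.mul_apply, hcom.eq]
      rw [hv, this, hBu i, map_zero]

/-- for pairwise commuting upper-triangular complex matrices
`T₁,…,Tₙ`, the joint eigenvalues are exactly the joint diagonal coefficients:
`(λ₁,…,λₙ)` is a joint eigenvalue iff there is an index `k` with
`λᵢ = (Tᵢ)ₖₖ` for all `i`. -/
theorem joint_eigenvalues_eq_joint_diagonal_coefficients
    (n N : ℕ)
    (T : Fin n → Matrix (Fin N) (Fin N) ℂ)
    (hcomm : ∀ i j, Commute (T i) (T j))
    (htri : ∀ (t : Fin n) (i j : Fin N), j < i → T t i j = 0)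
    (lam : Fin n → ℂ) :
    (∃ v : Fin N → ℂ, v ≠ 0 ∧ ∀ i, (T i).mulVec v = lam i • v) ↔
      ∃ k : Fin N, ∀ i, lam i = T i k k := by
  constructor
  · rintro ⟨v, hv0, hv⟩
    -- take the largest k with v k ≠ 0
    have hex : ∃ j, v j ≠ 0 := by
      by_contra hc
      push_neg at hc
      exact hv0 (funext hc)
    classical
    set S : Finset (Fin N) := Finset.univ.filter (fun j => v j ≠ 0) with hS
    have hSne : S.Nonempty := by
      obtain ⟨j, hj⟩ := hex
      exact ⟨j, by simp [hS, hj]⟩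
    set k := S.max' hSne with hk
    have hvk : v k ≠ 0 := by
      have := S.max'_mem hSne
      simp [hS] at this
      exact this
    have hgt : ∀ j, k < j → v j = 0 := by
      intro j hj
      by_contra hc
      exact absurd (S.le_max' j (by simp [hS, hc])) (not_le.mpr hj)
    refine ⟨k, fun i => ?_⟩
    have hrow : ((T i).mulVec v) k = T i k k * v k := by
      rw [Matrix.mulVec, dotProduct]
      rw [Finset.sum_eq_single k]
      · intro j _ hjk
        rcases lt_or_gt_of_ne hjk with hlt | hgt2
        · rw [htri i k j hlt, zero_mul]
        · rw [hgt j hgt2, mul_zero]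
      · intro h; exact absurd (Finset.mem_univ k) h
    have := congrFun (hv i) k
    rw [hrow] at this
    simp only [Pi.smul_apply, smul_eq_mul] at this
    exact (mul_right_cancel₀ hvk this.symm)
  · rintro ⟨k, hk⟩
    classical
    -- set up commuting endomorphisms B i = T i - lam i • 1
    set M : Fin n → Matrix (Fin N) (Fin N) ℂ := fun i => T i - lam i • 1 with hM
    set B : Fin n → Module.End ℂ (Fin N → ℂ) := fun i => (M i).mulVecLin with hB
    have hMcomm : ∀ i j, M i * M j = M j * M i := by
      intro i j
      simp only [hM, sub_mul, mul_sub, smul_mul_assoc, mul_smul_comm, one_mul, mul_one,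
        smul_sub, (hcomm i j).eq]
      rw [smul_comm (lam j) (lam i) (1 : Matrix (Fin N) (Fin N) ℂ)]
      abel
    have hBcomm : ∀ i j, B i * B j = B j * B i := by
      intro i j
      have h1 : B i * B j = (M i * M j).mulVecLin := by
        rw [hB, Matrix.mulVecLin_mul]; rfl
      have h2 : B j * B i = (M j * M i).mulVecLin := by
        rw [hB, Matrix.mulVecLin_mul]; rfl
      rw [h1, h2, hMcomm]
    -- entries of M
    have hMentry : ∀ i (a b : Fin N), b < a → M i a b = 0 := by
      intro i a b hab
      simp [hM, Matrix.sub_apply, Matrix.smul_apply, Matrix.one_apply_ne (ne_of_gt hab),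
        htri i a b hab]
    have hMdiag : ∀ i, M i k k = 0 := by
      intro i
      simp [hM, Matrix.sub_apply, Matrix.smul_apply, Matrix.one_apply_eq, ← hk i]
    -- the invariant subspace V
    set V : Submodule ℂ (Fin N → ℂ) :=
      { carrier := {x | ∀ j, k ≤ j → x j = 0}
        add_mem' := fun ha hb j hj => by
          simp only [Pi.add_apply, ha j hj, hb j hj, add_zero]
        zero_mem' := fun j hj => rfl
        smul_mem' := fun c a ha j hj => by
          simp only [Pi.smul_apply, ha j hj, smul_zero] } with hV
    have hVmem : ∀ x : Fin N → ℂ, x ∈ V ↔ ∀ j, k ≤ j → x j = 0 := fun x => Iff.rfl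
    have hVinv : ∀ i, ∀ x ∈ V, B i x ∈ V := by
      intro i x hx
      rw [hVmem] at hx ⊢
      intro j hj
      show ((M i).mulVec x) j = 0
      rw [Matrix.mulVec, dotProduct]
      apply Finset.sum_eq_zero
      intro l _
      rcases lt_or_ge l j with hl | hl
      · rw [hMentry i j l hl, zero_mul]
      · rw [hx l (le_trans hj hl), mul_zero]
    set w : Fin N → ℂ := Pi.single k 1 with hw
    have hwV : w ∉ V := by
      rw [hVmem]
      intro hc
      have := hc k le_rfl
      rw [hw, Pi.single_eq_same] at this
      exact one_ne_zero this
    have hBwV : ∀ i, B i w ∈ V := by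
      intro i
      rw [hVmem]
      intro j hj
      show ((M i).mulVec w) j = 0
      have hms := congrFun (Matrix.mulVec_single (M i) k (1 : ℂ)) j
      rw [hw, hms]
      rw [Pi.smul_apply, Matrix.col_apply, op_smul_eq_mul]
      rcases eq_or_lt_of_le hj with he | hlt
      · rw [← he, hMdiag i, zero_mul]
      · rw [hMentry i j k hlt, zero_mul]
    obtain ⟨u, hu0, hu⟩ := aux_common_kernel n (Fin N → ℂ) B hBcomm V hVinv w hwV hBwV
    refine ⟨u, hu0, fun i => ?_⟩
    have := hu i
    rw [hB] at this
    simp only [Matrix.mulVecLin_apply, hM, Matrix.sub_mulVec, Matrix.smul_mulVec,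
      Matrix.one_mulVec] at this
    exact sub_eq_zero.mp this
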